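/- Let E ⊆ ℝⁿ be permutation invariant, φ : ℝⁿ → ℝ be permutation invariant, and h : ℝⁿ → ℝ. If a maximizes h + φ over E and d is an E-subgradient of h at a (i.e., h(x) − h(a) ≥ ⟨d, x − a⟩ for all x ∈ E), then ⟨a, d⟩ = ⟨a↓, d↓⟩. -/

import Mathlib

open Finset

/-- Decreasing rearrangement of a vector in ℝⁿ. -/
noncomputable def dsort {n : ℕ} (v : Fin n → ℝ) : Fin n → ℝ :=
  fun i => - ((fun j => - v j) ∘ Tuple.sort (fun j => - v j)) i

lemma dsort_apply {n : ℕ} (v : Fin n → ℝ) (i : Fin n) :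
    dsort v i = v (Tuple.sort (fun j => - v j) i) := by
  simp [dsort]

lemma dsort_antitone {n : ℕ} (v : Fin n → ℝ) : Antitone (dsort v) := by
  intro i j hij
  have := Tuple.monotone_sort (fun j => - v j) hij
  simp only [Function.comp_apply] at this
  simp only [dsort, Function.comp_apply]
  linarith

theorem stmt4 {n : ℕ} (E : Set (Fin n → ℝ)) (hE : E.Nonempty)
    (hinv : ∀ x ∈ E, ∀ σ : Equiv.Perm (Fin n), (fun i => x (σ i)) ∈ E)
    (φ h : (Fin n → ℝ) → ℝ)
    (hφ : ∀ x, ∀ σ : Equiv.Perm (Fin n), φ (fun i => x (σ i)) = φ x)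
    (a : Fin n → ℝ) (ha : a ∈ E)
    (hmax : ∀ x ∈ E, h x + φ x ≤ h a + φ a)
    (d : Fin n → ℝ)
    (hd : ∀ x ∈ E, h x - h a ≥ ∑ i, d i * (x i - a i)) :
    ∑ i, a i * d i = ∑ i, dsort a i * dsort d i := by
  set τ : Equiv.Perm (Fin n) := Tuple.sort (fun j => - a j) with hτ
  set ρ : Equiv.Perm (Fin n) := Tuple.sort (fun j => - d j) with hρ
  -- Key: for any permutation σ, ∑ a (σ i) * d i ≤ ∑ a i * d i
  have key : ∀ σ : Equiv.Perm (Fin n), ∑ i, a (σ i) * d i ≤ ∑ i, a i * d i := by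
    intro σ
    have hx : (fun i => a (σ i)) ∈ E := hinv a ha σ
    have h1 : h (fun i => a (σ i)) ≤ h a := by
      have hm := hmax _ hx
      have hp := hφ a σ
      linarith
    have h2 := hd _ hx
    have h3 : ∑ i, d i * (a (σ i) - a i) ≤ 0 := le_trans h2 (by linarith)
    have h4 : ∑ i, d i * a (σ i) - ∑ i, d i * a i ≤ 0 := by
      simpa [mul_sub, Finset.sum_sub_distrib] using h3
    calc ∑ i, a (σ i) * d i = ∑ i, d i * a (σ i) := by
          exact Finset.sum_congr rfl fun i _ => mul_comm _ _
      _ ≤ ∑ i, d i * a i := by linarith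
      _ = ∑ i, a i * d i := Finset.sum_congr rfl fun i _ => mul_comm _ _
  -- RHS ≤ LHS
  have hle1 : ∑ i, dsort a i * dsort d i ≤ ∑ i, a i * d i := by
    have := key (ρ.symm.trans τ)
    calc ∑ i, dsort a i * dsort d i
        = ∑ i, a (τ i) * d (ρ i) := by
          exact Finset.sum_congr rfl fun i _ => by rw [dsort_apply, dsort_apply]
      _ = ∑ j, a (τ (ρ.symm j)) * d j := by
          rw [← Equiv.sum_comp ρ (fun j => a (τ (ρ.symm j)) * d j)]
          simp
      _ ≤ ∑ i, a i * d i := key (ρ.symm.trans τ)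
  -- LHS ≤ RHS via rearrangement inequality
  have hmono : Monovary (dsort a) (dsort d) := by
    intro i j hij
    have hji : j < i := by
      by_contra hc
      push_neg at hc
      exact absurd (dsort_antitone d hc) (not_le.mpr hij)
    exact dsort_antitone a hji.le
  have hle2 : ∑ i, a i * d i ≤ ∑ i, dsort a i * dsort d i := by
    have h5 : ∑ i, a i * d i = ∑ j, dsort a ((ρ.trans τ.symm) j) * dsort d j := by
      calc ∑ i, a i * d i
          = ∑ i, dsort a (τ.symm i) * dsort d (ρ.symm i) := by
            refine Finset.sum_congr rfl fun i _ => ?_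
            rw [dsort_apply, dsort_apply]
            simp [hτ, hρ]
        _ = ∑ j, dsort a (τ.symm (ρ j)) * dsort d j := by
            rw [← Equiv.sum_comp ρ (fun i => dsort a (τ.symm i) * dsort d (ρ.symm i))]
            simp
        _ = ∑ j, dsort a ((ρ.trans τ.symm) j) * dsort d j := rfl
    rw [h5]
    have := hmono.sum_comp_perm_smul_le_sum_smul (σ := ρ.trans τ.symm)
    simpa [smul_eq_mul] using this
  linarith
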